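/- For every prime power q, f(q², C_6) ≤ 2q, where C_6 denotes the cycle of length 6. -/

import Mathlib

open SimpleGraph

/-- `G` is an `(r,k)`-graph: its vertex set can be partitioned into `r` parts,
each of size at most `k`, with at least one edge between any two distinct parts. -/
def IsRKGraph {V : Type} [Fintype V] (G : SimpleGraph V) (r k : ℕ) : Prop :=
  ∃ P : Fin r → Finset V,
    (∀ v : V, ∃! i, v ∈ P i) ∧
    (∀ i, (P i).card ≤ k) ∧
    ∀ i j : Fin r, i ≠ j → ∃ u ∈ P i, ∃ w ∈ P j, G.Adj u w

/-- `G` contains a subgraph isomorphic to `H`. -/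
def ContainsSub {W V : Type} (H : SimpleGraph W) (G : SimpleGraph V) : Prop :=
  ∃ f : H →g G, Function.Injective f

/-- `f(r,H)`: the minimum `k` for which there exists an `H`-free `(r,k)`-graph. -/
noncomputable def fGraph {W : Type} (H : SimpleGraph W) (r : ℕ) : ℕ :=
  sInf {k | ∃ (n : ℕ) (G : SimpleGraph (Fin n)), ¬ ContainsSub H G ∧ IsRKGraph G r k}

section PG
variable {K : Type} [Field K]

/-- incidence relation between "points" and "lines" (Wenger-type graph of girth 8). -/
def lineE (p l : K × K × K) : Prop :=
  l.2.1 = l.1 * p.1 + p.2.1 ∧ l.2.2 = l.1 * p.2.1 + p.2.2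

def pgraph (K : Type) [Field K] : SimpleGraph ((K × K × K) ⊕ (K × K × K)) where
  Adj v w := match v, w with
    | Sum.inl p, Sum.inr l => lineE p l
    | Sum.inr l, Sum.inl p => lineE p l
    | _, _ => False
  symm := ⟨by rintro (p|l) (p'|l') h <;> exact h⟩
  loopless := ⟨by rintro (p|l) h <;> exact h⟩

lemma pgraph_adj_inl {p : K × K × K} {w : (K × K × K) ⊕ (K × K × K)}
    (h : (pgraph K).Adj (Sum.inl p) w) : ∃ l, w = Sum.inr l ∧ lineE p l := by
  cases w with
  | inl p' => exact h.elim
  | inr l => exact ⟨l, rfl, h⟩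

lemma pgraph_adj_inr {l : K × K × K} {w : (K × K × K) ⊕ (K × K × K)}
    (h : (pgraph K).Adj (Sum.inr l) w) : ∃ p, w = Sum.inl p ∧ lineE p l := by
  cases w with
  | inl p => exact ⟨p, rfl, h⟩
  | inr l' => exact h.elim

lemma pgraph_adj_mk {p l : K × K × K} (h : lineE p l) :
    (pgraph K).Adj (Sum.inl p) (Sum.inr l) := h

lemma nosix {p p' p'' l l' l'' : K × K × K}
    (h1 : lineE p l) (h2 : lineE p' l) (h3 : lineE p' l') (h4 : lineE p'' l')
    (h5 : lineE p'' l'') (h6 : lineE p l'')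
    (hpp2 : p' ≠ p'') (hll : l ≠ l') (hll2 : l' ≠ l'') : False := by
  obtain ⟨a1, a2, a3⟩ := p; obtain ⟨b1, b2, b3⟩ := p'; obtain ⟨c1, c2, c3⟩ := p''
  obtain ⟨x, y2, y3⟩ := l; obtain ⟨x', u2, u3⟩ := l'; obtain ⟨x'', w2, w3⟩ := l''
  obtain ⟨h1a, h1b⟩ := h1
  obtain ⟨h2a, h2b⟩ := h2
  obtain ⟨h3a, h3b⟩ := h3
  obtain ⟨h4a, h4b⟩ := h4
  obtain ⟨h5a, h5b⟩ := h5
  obtain ⟨h6a, h6b⟩ := h6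
  simp only at h1a h1b h2a h2b h3a h3b h4a h4b h5a h5b h6a h6b
  -- slopes are pairwise distinct
  have hx1 : x' ≠ x := by
    rintro rfl
    refine hll ?_
    rw [Prod.mk.injEq, Prod.mk.injEq]
    exact ⟨rfl, (by rw [h2a, h3a]), (by rw [h2b, h3b])⟩
  have hx2 : x' ≠ x'' := by
    rintro rfl
    refine hll2 ?_
    rw [Prod.mk.injEq, Prod.mk.injEq]
    exact ⟨rfl, (by rw [h4a, h5a]), (by rw [h4b, h5b])⟩
  have key : (x' - x'') * ((x' - x) * (b1 - c1)) = 0 := by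
    linear_combination (-x'') * (h2a - h1a) + (x' - x - x'') * (h4a - h3a)
      - x * (h6a - h5a) - (h2b - h1b) - (h4b - h3b) - (h6b - h5b)
  have hB : b1 = c1 := by
    rcases mul_eq_zero.mp key with h | h
    · exact absurd (sub_eq_zero.mp h) hx2
    rcases mul_eq_zero.mp h with h | h
    · exact absurd (sub_eq_zero.mp h) hx1
    · exact sub_eq_zero.mp h
  have hB2 : b2 = c2 := by linear_combination h4a - h3a - x' * hB
  have hB3 : b3 = c3 := by linear_combination h4b - h3b - x' * hB2
  exact hpp2 (by rw [hB, hB2, hB3])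

lemma pgraph_c6_free : ¬ ContainsSub (SimpleGraph.cycleGraph 6) (pgraph K) := by
  rintro ⟨f, hf⟩
  have hadj : ∀ a b : Fin 6, (cycleGraph 6).Adj a b → (pgraph K).Adj (f a) (f b) :=
    fun a b h => f.map_adj h
  have hne : ∀ a b : Fin 6, a ≠ b → f a ≠ f b := fun a b h h' => h (hf h')
  -- main pattern: starting from a point vertex u0, with cycle u0 u1 u2 u3 u4 u5
  have main : ∀ u0 u1 u2 u3 u4 u5 : Fin 6,
      (pgraph K).Adj (f u0) (f u1) → (pgraph K).Adj (f u1) (f u2) →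
      (pgraph K).Adj (f u2) (f u3) → (pgraph K).Adj (f u3) (f u4) →
      (pgraph K).Adj (f u4) (f u5) → (pgraph K).Adj (f u5) (f u0) →
      u0 ≠ u2 → u2 ≠ u4 → u1 ≠ u3 → u3 ≠ u5 →
      (∃ p, f u0 = Sum.inl p) → False := by
    intro u0 u1 u2 u3 u4 u5 a01 a12 a23 a34 a45 a50 n02 n24 n13 n35 ⟨p0, e0⟩
    rw [e0] at a01 a50
    obtain ⟨l1, e1, E01⟩ := pgraph_adj_inl a01
    rw [e1] at a12
    obtain ⟨p2, e2, E21⟩ := pgraph_adj_inr a12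
    rw [e2] at a23
    obtain ⟨l3, e3, E23⟩ := pgraph_adj_inl a23
    rw [e3] at a34
    obtain ⟨p4, e4, E43⟩ := pgraph_adj_inr a34
    rw [e4] at a45
    obtain ⟨l5, e5, E45⟩ := pgraph_adj_inl a45
    rw [e5] at a50
    have E05 : lineE p0 l5 := a50
    refine nosix E01 E21 E23 E43 E45 E05 ?_ ?_ ?_
    · intro h; exact hne u2 u4 n24 (by rw [e2, e4, h])
    · intro h; exact hne u1 u3 n13 (by rw [e1, e3, h])
    · intro h; exact hne u3 u5 n35 (by rw [e3, e5, h])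
  have a01 := hadj 0 1 (by decide)
  have a12 := hadj 1 2 (by decide)
  have a23 := hadj 2 3 (by decide)
  have a34 := hadj 3 4 (by decide)
  have a45 := hadj 4 5 (by decide)
  have a50 := hadj 5 0 (by decide)
  cases h0 : f 0 with
  | inl p =>
    exact main 0 1 2 3 4 5 a01 a12 a23 a34 a45 a50
      (by decide) (by decide) (by decide) (by decide) ⟨p, h0⟩
  | inr l =>
    obtain ⟨p1, e1, _⟩ := pgraph_adj_inr (h0 ▸ a01)
    exact main 1 2 3 4 5 0 a12 a23 a34 a45 a50 a01
      (by decide) (by decide) (by decide) (by decide) ⟨p1, e1⟩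

end PG

theorem exists_good_graph (q : ℕ) (K : Type) [Field K] [Fintype K]
    (hK : Fintype.card K = q) :
    ∃ (n : ℕ) (G : SimpleGraph (Fin n)),
      ¬ ContainsSub (SimpleGraph.cycleGraph 6) G ∧ IsRKGraph G (q ^ 2) (2 * q) := by
  classical
  set V := (K × K × K) ⊕ (K × K × K) with hV
  have hcard2 : Fintype.card (K × K) = q ^ 2 := by
    simp [Fintype.card_prod, hK, sq]
  let e2 : Fin (q ^ 2) ≃ K × K := (Fintype.equivFinOfCardEq hcard2).symm
  let P : Fin (q ^ 2) → Finset V := fun i =>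
    (Finset.univ.image fun s : K => (Sum.inl ((e2 i).1, (e2 i).2, s) : V)) ∪
    (Finset.univ.image fun y : K => (Sum.inr ((e2 i).1, y, (e2 i).2) : V))
  have memP : ∀ (i : Fin (q ^ 2)) (v : V), v ∈ P i ↔
      ((∃ s, v = Sum.inl ((e2 i).1, (e2 i).2, s)) ∨
       (∃ y, v = Sum.inr ((e2 i).1, y, (e2 i).2))) := by
    intro i v
    simp [P, eq_comm]
  have huniq : ∀ v : V, ∃! i, v ∈ P i := by
    intro v
    cases v with
    | inl p =>
      obtain ⟨pa, pb, pc⟩ := p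
      refine ⟨e2.symm (pa, pb), ?_, ?_⟩
      · simp only [memP]
        exact Or.inl ⟨pc, by simp⟩
      · intro j hj
        simp only [memP] at hj
        rcases hj with ⟨s, hs⟩ | ⟨y, hy⟩
        · rw [Sum.inl.injEq, Prod.mk.injEq, Prod.mk.injEq] at hs
          have hj2 : e2 j = (pa, pb) := by
            rw [Prod.ext_iff]
            exact ⟨hs.1.symm, hs.2.1.symm⟩
          rw [← hj2, Equiv.symm_apply_apply]
        · simp at hy
    | inr l =>
      obtain ⟨la, lb, lc⟩ := l
      refine ⟨e2.symm (la, lc), ?_, ?_⟩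
      · simp only [memP]
        exact Or.inr ⟨lb, by simp⟩
      · intro j hj
        simp only [memP] at hj
        rcases hj with ⟨s, hs⟩ | ⟨y, hy⟩
        · simp at hs
        · rw [Sum.inr.injEq, Prod.mk.injEq, Prod.mk.injEq] at hy
          have hj2 : e2 j = (la, lc) := by
            rw [Prod.ext_iff]
            exact ⟨hy.1.symm, hy.2.2.symm⟩
          rw [← hj2, Equiv.symm_apply_apply]
  have hcardP : ∀ i, (P i).card ≤ 2 * q := by
    intro i
    calc (P i).card ≤ _ + _ := Finset.card_union_le _ _
      _ ≤ Finset.univ.card + Finset.univ.card :=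
        Nat.add_le_add (Finset.card_image_le) (Finset.card_image_le)
      _ = 2 * q := by rw [Finset.card_univ, hK, two_mul]
  have hedge : ∀ i j : Fin (q ^ 2), ∃ u ∈ P i, ∃ w ∈ P j, (pgraph K).Adj u w := by
    intro i j
    refine ⟨Sum.inl ((e2 i).1, (e2 i).2, (e2 j).2 - (e2 j).1 * (e2 i).2), ?_,
            Sum.inr ((e2 j).1, (e2 j).1 * (e2 i).1 + (e2 i).2, (e2 j).2), ?_, ?_⟩
    · exact (memP i _).mpr (Or.inl ⟨_, rfl⟩)
    · exact (memP j _).mpr (Or.inr ⟨_, rfl⟩)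
    · exact pgraph_adj_mk ⟨rfl, by show (e2 j).2 = (e2 j).1 * (e2 i).2 + _; ring⟩
  -- transport to `Fin n`
  let n := Fintype.card V
  let e : Fin n ≃ V := (Fintype.equivFin V).symm
  refine ⟨n, (pgraph K).comap e, ?_, ?_⟩
  · rintro ⟨g, hg⟩
    refine pgraph_c6_free (K := K) ?_
    exact ⟨SimpleGraph.Hom.comp ⟨e, fun h => h⟩ g, e.injective.comp hg⟩
  · refine ⟨fun i => (P i).map e.symm.toEmbedding, ?_, ?_, ?_⟩
    · intro v
      have memP' : ∀ (i) (v : Fin n), v ∈ (P i).map e.symm.toEmbedding ↔ e v ∈ P i := by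
        intro i v
        rw [Finset.mem_map_equiv, Equiv.symm_symm]
      obtain ⟨i, hi, hu⟩ := huniq (e v)
      exact ⟨i, (memP' i v).mpr hi, fun j hj => hu j ((memP' j v).mp hj)⟩
    · intro i
      rw [Finset.card_map]
      exact hcardP i
    · intro i j _
      obtain ⟨u, hu, w, hw, hadj⟩ := hedge i j
      refine ⟨e.symm u, ?_, e.symm w, ?_, ?_⟩
      · rw [Finset.mem_map_equiv, Equiv.symm_symm, Equiv.apply_symm_apply]
        exact hu
      · rw [Finset.mem_map_equiv, Equiv.symm_symm, Equiv.apply_symm_apply]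
        exact hw
      · show (pgraph K).Adj (e (e.symm u)) (e (e.symm w))
        rw [Equiv.apply_symm_apply, Equiv.apply_symm_apply]
        exact hadj

theorem stmt16 (q : ℕ) (hq : IsPrimePow q) :
    fGraph (SimpleGraph.cycleGraph 6) (q ^ 2) ≤ 2 * q := by
  obtain ⟨p, k, hp, hk, rfl⟩ := hq
  haveI : Fact (Nat.Prime p) := ⟨Nat.prime_iff.mpr hp⟩
  haveI : Fintype (GaloisField p k) := Fintype.ofFinite _
  have hcard : Fintype.card (GaloisField p k) = p ^ k := by
    rw [← Nat.card_eq_fintype_card]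
    exact GaloisField.card p k hk.ne'
  obtain ⟨n, G, h1, h2⟩ := exists_good_graph (p ^ k) (GaloisField p k) hcard
  exact Nat.sInf_le ⟨n, G, h1, h2⟩
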